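/- For any system of means M, the function θ : (0,1) → ℝ≥0 defined by θ(s) = M((s, 1−s), (1, 0)) is non-strictly increasing: if s ≤ s' in (0,1) then θ(s) ≤ θ(s'). -/

import Mathlib

open scoped NNReal ENNReal BigOperators

/-- The power mean `M_p` of order `p ∈ [0,∞]` with weights `w` and arguments `x`. -/
noncomputable def powerMean (p : ℝ≥0∞) {n : ℕ} (w x : Fin n → ℝ≥0) : ℝ≥0 :=
  if p = ∞ then (Finset.univ.filter (fun i => 0 < w i)).sup x
  else if p = 0 then ∏ i, x i ^ ((w i : ℝ))
  else (∑ i, w i * x i ^ p.toReal) ^ (1 / p.toReal)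

/-- A system of means: for each `n`, a function `M n : Δ_n × ℝ≥0ⁿ → ℝ≥0`
(defined on all of `ℝ≥0ⁿ × ℝ≥0ⁿ`, with the axioms demanded only when `∑ w = 1`),
satisfying functoriality, consistency and monotonicity. -/
structure MeanSystem where
  M : ∀ n : ℕ, (Fin n → ℝ≥0) → (Fin n → ℝ≥0) → ℝ≥0
  functorial : ∀ {m n : ℕ} (f : Fin m → Fin n) (w : Fin m → ℝ≥0),
    (∑ i, w i) = 1 → ∀ x : Fin n → ℝ≥0,
      M n (fun j => ∑ i ∈ Finset.univ.filter (fun i => f i = j), w i) x = M m w (x ∘ f)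
  consistent : ∀ c : ℝ≥0, M 1 (fun _ => 1) (fun _ => c) = c
  mono : ∀ {n : ℕ} (w x y : Fin n → ℝ≥0), (∑ i, w i) = 1 →
    (∀ i, x i ≤ y i) → M n w x ≤ M n w y

/-- Multiplicativity of a system of means, with respect to the fixed bijection
`finProdFinEquiv : Fin m × Fin n ≃ Fin (m * n)`. -/
def MeanSystem.IsMultiplicative (S : MeanSystem) : Prop :=
  ∀ {m n : ℕ} (w x : Fin m → ℝ≥0) (v y : Fin n → ℝ≥0),
    (∑ i, w i) = 1 → (∑ j, v j) = 1 →
    S.M (m * n) (fun k => w (finProdFinEquiv.symm k).1 * v (finProdFinEquiv.symm k).2)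
        (fun k => x (finProdFinEquiv.symm k).1 * y (finProdFinEquiv.symm k).2)
      = S.M m w x * S.M n v y

/-- Convexity of a system of means. -/
def MeanSystem.IsConvex (S : MeanSystem) : Prop :=
  ∀ {n : ℕ} (w x y : Fin n → ℝ≥0), (∑ i, w i) = 1 →
    S.M n w (fun i => (x i + y i) / 2) ≤ max (S.M n w x) (S.M n w y)

/-- For any system of means, the function `θ(s) = M((s, 1−s), (1, 0))` is
(non-strictly) increasing on `(0,1)`. -/
theorem meanSystem_theta_monotone (S : MeanSystem)
    (s s' : ℝ≥0) (hs0 : 0 < s) (hss' : s ≤ s') (hs'1 : s' < 1) :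
    S.M 2 ![s, 1 - s] ![1, 0] ≤ S.M 2 ![s', 1 - s'] ![1, 0] := by

  have hs'le : s' ≤ 1 := hs'1.le
  set w : Fin 3 → ℝ≥0 := ![s, s' - s, 1 - s'] with hw
  have hsum : (∑ i, w i) = 1 := by
    simp only [hw, Fin.sum_univ_three, Matrix.cons_val_zero, Matrix.cons_val_one,
      Matrix.head_cons, Matrix.cons_val_two, Matrix.tail_cons]
    rw [add_tsub_cancel_of_le hss', add_tsub_cancel_of_le hs'le]
  have h1 : S.M 3 w (![(1:ℝ≥0), 0] ∘ ![0, 1, 1]) = S.M 2 ![s, 1 - s] ![1, 0] := by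
    rw [← S.functorial (![0,1,1] : Fin 3 → Fin 2) w hsum ![1,0]]
    congr 1
    funext j
    fin_cases j <;>
      simp [hw, Finset.sum_filter, Fin.sum_univ_three] <;>
      rw [add_comm, tsub_add_tsub_cancel hs'le hss']
  have h2 : S.M 3 w (![(1:ℝ≥0), 0] ∘ ![0, 0, 1]) = S.M 2 ![s', 1 - s'] ![1, 0] := by
    rw [← S.functorial (![0,0,1] : Fin 3 → Fin 2) w hsum ![1,0]]
    congr 1
    funext j
    fin_cases j <;>
      simp [hw, Finset.sum_filter, Fin.sum_univ_three] <;>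
      rw [add_tsub_cancel_of_le hss']
  rw [← h1, ← h2]
  apply S.mono w _ _ hsum
  intro i
  fin_cases i <;> simp
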